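/- Let F be a forest containing a vertex u adjacent to at least five leaves l_1, …, l_5, let v be a vertex of F distinct from u and from these five leaves, and let F' be the forest obtained from F by deleting the edges ul_1, ul_2, ul_3 and adding the edges vl_1, vl_2, vl_3. If an edge-coloring χ : E(K_m) → Z_3 admits a copy of F whose edge colors sum to 0 in Z_3, then χ also admits a copy of F' whose edge colors sum to 0 in Z_3. -/
import Mathlib


open Finset

/-- A zero-sum (over `ZMod 3`) copy of the graph `F` in the edge-colored complete graph
on `Fin N`. -/
def HasZeroSumCopy {V : Type} [Fintype V] [DecidableEq V] {N : ℕ}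
    (F : SimpleGraph V) [DecidableRel F.Adj] (χ : Sym2 (Fin N) → ZMod 3) : Prop :=
  ∃ f : V → Fin N, Function.Injective f ∧ ∑ e ∈ F.edgeFinset, χ (e.map f) = 0

set_option maxHeartbeats 2000000 in
set_option maxRecDepth 10000 in
private lemma egz5 : ∀ d : Fin 5 → ZMod 3,
    ∃ π : Equiv.Perm (Fin 5), d (π 0) + d (π 1) + d (π 2) = 0 := by decide

theorem stmt16 {V : Type} [Fintype V] [DecidableEq V]
    (F F' : SimpleGraph V) [DecidableRel F.Adj] [DecidableRel F'.Adj]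
    (hforest : F.IsAcyclic)
    (u v : V) (l : Fin 5 → V)
    (hinj : Function.Injective l)
    (hlu : ∀ i, l i ≠ u) (hlv : ∀ i, l i ≠ v) (huv : u ≠ v)
    (hleaf : ∀ i, F.degree (l i) = 1)
    (hadj : ∀ i, F.Adj u (l i))
    -- `F'` is obtained from `F` by deleting the edges `u lᵢ` and
    -- adding the edges `v lᵢ`, for `i = 0, 1, 2`.
    (hF' : ∀ x y : V, F'.Adj x y ↔
      ((F.Adj x y ∧ s(x, y) ≠ s(u, l 0) ∧ s(x, y) ≠ s(u, l 1) ∧ s(x, y) ≠ s(u, l 2)) ∨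
        s(x, y) = s(v, l 0) ∨ s(x, y) = s(v, l 1) ∨ s(x, y) = s(v, l 2)))
    {m : ℕ} (χ : Sym2 (Fin m) → ZMod 3)
    (h : HasZeroSumCopy F χ) :
    HasZeroSumCopy F' χ := by
  obtain ⟨f, hf, hsum⟩ := h
  have hcases : ∀ t : Fin 5, t = 0 ∨ t = 1 ∨ t = 2 ∨ t = 3 ∨ t = 4 := by decide
  -- every neighbor of a leaf `l t` equals `u`
  have hnbr : ∀ (t : Fin 5) (x : V), F.Adj x (l t) → x = u := by
    intro t x hx
    have hcard : (F.neighborFinset (l t)).card ≤ 1 := le_of_eq (hleaf t)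
    have hx' : x ∈ F.neighborFinset (l t) := (SimpleGraph.mem_neighborFinset _ _ _).mpr hx.symm
    have hu' : u ∈ F.neighborFinset (l t) := (SimpleGraph.mem_neighborFinset _ _ _).mpr (hadj t).symm
    exact Finset.card_le_one.mp hcard x hx' u hu'
  -- every edge of `F` containing `l t` is `s(u, l t)`
  have hedge : ∀ (t : Fin 5) (e : Sym2 V), e ∈ F.edgeSet → l t ∈ e → e = s(u, l t) := by
    intro t e
    induction e using Sym2.ind with
    | _ x y =>
      intro he hm
      rw [Sym2.mem_iff] at hm
      rcases hm with rfl | rfl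
      · have : y = u := hnbr t y ((SimpleGraph.mem_edgeSet F).mp he).symm
        subst this; exact Sym2.eq_swap
      · have : x = u := hnbr t x ((SimpleGraph.mem_edgeSet F).mp he)
        subst this; rfl
  have hnFv : ∀ t, ¬ F.Adj v (l t) := fun t ha => huv (hnbr t v ha).symm
  set d : Fin 5 → ZMod 3 := fun t => χ s(f v, f (l t)) - χ s(f u, f (l t)) with hd
  obtain ⟨π, hπ⟩ := egz5 d
  have hπ' : (χ s(f v, f (l (π 0))) - χ s(f u, f (l (π 0)))) +
      (χ s(f v, f (l (π 1))) - χ s(f u, f (l (π 1)))) +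
      (χ s(f v, f (l (π 2))) - χ s(f u, f (l (π 2)))) = 0 := hπ
  set ι : Fin 5 ↪ V := ⟨l, hinj⟩ with hι
  set σ : Equiv.Perm V := π.viaEmbedding ι with hσdef
  have hσl : ∀ t, σ (l t) = l (π t) := fun t => π.viaEmbedding_apply ι t
  have hσfix : ∀ x : V, (∀ t, l t ≠ x) → σ x = x := by
    intro x hx
    apply π.viaEmbedding_apply_of_notMem
    rintro ⟨t, ht⟩; exact hx t ht
  have hσu : σ u = u := hσfix u hlu
  have hσv : σ v = v := hσfix v hlv
  refine ⟨f ∘ σ, hf.comp σ.injective, ?_⟩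
  -- auxiliary finsets
  set w : Fin 5 → V := fun t => if t.val < 3 then v else u with hw
  have hw0 : w 0 = v := rfl
  have hw1 : w 1 = v := rfl
  have hw2 : w 2 = v := rfl
  have hw3 : w 3 = u := rfl
  have hw4 : w 4 = u := rfl
  have hwuv : ∀ t, w t = u ∨ w t = v := by
    intro t; by_cases h3 : t.val < 3 <;> simp [hw, h3]
  have hlw : ∀ t t' : Fin 5, l t ≠ w t' := by
    intro t t'
    rcases hwuv t' with hh | hh <;> rw [hh]
    · exact hlu t
    · exact hlv t
  set L : Finset (Sym2 V) := Finset.univ.image (fun t : Fin 5 => s(u, l t)) with hL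
  set c : Fin 5 → Sym2 V := fun t => s(w t, l t) with hc
  set C : Finset (Sym2 V) := Finset.univ.image c with hC
  have hL_inj : ∀ t t' : Fin 5, s(u, l t) = s(u, l t') → t = t' := by
    intro t t' hh
    rw [Sym2.eq_iff] at hh
    rcases hh with ⟨-, hh⟩ | ⟨h1, h2⟩
    · exact hinj hh
    · exact absurd h1.symm (hlu t')
  have hc_inj : ∀ t t' : Fin 5, c t = c t' → t = t' := by
    intro t t' hh
    have hh' : s(w t, l t) = s(w t', l t') := hh
    rw [Sym2.eq_iff] at hh'
    rcases hh' with ⟨-, hh'⟩ | ⟨h1, h2⟩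
    · exact hinj hh'
    · exact absurd h2 (hlw t t')
  have hLsub : L ⊆ F.edgeFinset := by
    intro e he
    rw [hL, Finset.mem_image] at he
    obtain ⟨t, -, rfl⟩ := he
    exact SimpleGraph.mem_edgeFinset.mpr (hadj t)
  -- the edge finset of `F'`
  have hE' : F'.edgeFinset = (F.edgeFinset \ L) ∪ C := by
    ext e
    induction e using Sym2.ind with
    | _ x y =>
      simp only [SimpleGraph.mem_edgeFinset, SimpleGraph.mem_edgeSet, Finset.mem_union,
        Finset.mem_sdiff, hL, hC, Finset.mem_image, Finset.mem_univ, true_and, hF']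
      constructor
      · rintro (⟨hxy, h0, h1, h2⟩ | h0 | h1 | h2)
        · by_cases hm : ∃ t : Fin 5, s(u, l t) = s(x, y)
          · obtain ⟨t, ht⟩ := hm
            right
            rcases hcases t with rfl | rfl | rfl | rfl | rfl
            · exact absurd ht.symm h0
            · exact absurd ht.symm h1
            · exact absurd ht.symm h2
            · exact ⟨3, by show s(w 3, l 3) = s(x, y); rw [hw3]; exact ht⟩
            · exact ⟨4, by show s(w 4, l 4) = s(x, y); rw [hw4]; exact ht⟩
          · exact Or.inl ⟨hxy, hm⟩
        · exact Or.inr ⟨0, by show s(w 0, l 0) = s(x, y); rw [hw0]; exact h0.symm⟩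
        · exact Or.inr ⟨1, by show s(w 1, l 1) = s(x, y); rw [hw1]; exact h1.symm⟩
        · exact Or.inr ⟨2, by show s(w 2, l 2) = s(x, y); rw [hw2]; exact h2.symm⟩
      · rintro (⟨hxy, hnot⟩ | ⟨t, ht⟩)
        · exact Or.inl ⟨hxy, fun hh => hnot ⟨0, hh.symm⟩, fun hh => hnot ⟨1, hh.symm⟩,
            fun hh => hnot ⟨2, hh.symm⟩⟩
        · rcases hcases t with rfl | rfl | rfl | rfl | rfl
          · have ht' : s(v, l 0) = s(x, y) := by rw [← hw0]; exact ht
            exact Or.inr (Or.inl ht'.symm)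
          · have ht' : s(v, l 1) = s(x, y) := by rw [← hw1]; exact ht
            exact Or.inr (Or.inr (Or.inl ht'.symm))
          · have ht' : s(v, l 2) = s(x, y) := by rw [← hw2]; exact ht
            exact Or.inr (Or.inr (Or.inr ht'.symm))
          · have ht' : s(u, l 3) = s(x, y) := by rw [← hw3]; exact ht
            refine Or.inl ⟨(SimpleGraph.mem_edgeSet F).mp
              (ht' ▸ ((SimpleGraph.mem_edgeSet F).mpr (hadj 3))), ?_, ?_, ?_⟩
            · intro hh; exact absurd (hL_inj 3 0 (ht'.trans hh)) (by decide)
            · intro hh; exact absurd (hL_inj 3 1 (ht'.trans hh)) (by decide)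
            · intro hh; exact absurd (hL_inj 3 2 (ht'.trans hh)) (by decide)
          · have ht' : s(u, l 4) = s(x, y) := by rw [← hw4]; exact ht
            refine Or.inl ⟨(SimpleGraph.mem_edgeSet F).mp
              (ht' ▸ ((SimpleGraph.mem_edgeSet F).mpr (hadj 4))), ?_, ?_, ?_⟩
            · intro hh; exact absurd (hL_inj 4 0 (ht'.trans hh)) (by decide)
            · intro hh; exact absurd (hL_inj 4 1 (ht'.trans hh)) (by decide)
            · intro hh; exact absurd (hL_inj 4 2 (ht'.trans hh)) (by decide)
  have hdisj : Disjoint (F.edgeFinset \ L) C := by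
    rw [Finset.disjoint_right]
    intro e heC heL
    rw [hC, Finset.mem_image] at heC
    obtain ⟨t, -, rfl⟩ := heC
    rw [Finset.mem_sdiff] at heL
    obtain ⟨heE, henL⟩ := heL
    by_cases h3 : t.val < 3
    · have hwt : c t = s(v, l t) := by
        show s(w t, l t) = _
        rw [show w t = v from by simp [hw, h3]]
      rw [hwt] at heE
      exact hnFv t ((SimpleGraph.mem_edgeSet F).mp (SimpleGraph.mem_edgeFinset.mp heE))
    · have hwt : c t = s(u, l t) := by
        show s(w t, l t) = _
        rw [show w t = u from by simp [hw, h3]]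
      rw [hwt] at henL
      exact henL (by rw [hL, Finset.mem_image]; exact ⟨t, Finset.mem_univ t, rfl⟩)
  -- maps agree off `L`
  have hmap : ∀ e ∈ F.edgeFinset \ L, χ (e.map (f ∘ σ)) = χ (e.map f) := by
    intro e
    induction e using Sym2.ind with
    | _ x y =>
      intro he
      rw [Finset.mem_sdiff] at he
      obtain ⟨heE, henL⟩ := he
      have heS : s(x, y) ∈ F.edgeSet := SimpleGraph.mem_edgeFinset.mp heE
      have hx : σ x = x := by
        apply hσfix
        intro t ht
        apply henL
        rw [hL, Finset.mem_image]
        exact ⟨t, Finset.mem_univ t,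
          (hedge t _ heS (by rw [← ht]; exact Sym2.mem_mk_left _ _)).symm⟩
      have hy : σ y = y := by
        apply hσfix
        intro t ht
        apply henL
        rw [hL, Finset.mem_image]
        exact ⟨t, Finset.mem_univ t,
          (hedge t _ heS (by rw [← ht]; exact Sym2.mem_mk_right _ _)).symm⟩
      rw [Sym2.map_pair_eq, Sym2.map_pair_eq, Function.comp_apply, Function.comp_apply, hx, hy]
  -- sum over `L`
  have hLsum : ∑ e ∈ L, χ (e.map f) = ∑ t : Fin 5, χ s(f u, f (l (π t))) := by
    rw [hL, Finset.sum_image (fun t _ t' _ hh => hL_inj t t' hh)]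
    rw [← Equiv.sum_comp π (fun t => χ (Sym2.map f s(u, l t)))]
    simp only [Sym2.map_pair_eq]
  have hEsplit : ∑ e ∈ F.edgeFinset \ L, χ (e.map f)
      + ∑ t : Fin 5, χ s(f u, f (l (π t))) = 0 := by
    rw [← hLsum, Finset.sum_sdiff hLsub]
    exact hsum
  have hcval : ∀ t : Fin 5, χ (Sym2.map (f ∘ σ) (c t)) = χ s(f (w t), f (l (π t))) := by
    intro t
    have hσw : σ (w t) = w t := by
      rcases hwuv t with hh | hh <;> rw [hh]
      · exact hσu
      · exact hσv
    show χ (Sym2.map (f ∘ σ) s(w t, l t)) = _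
    rw [Sym2.map_pair_eq, Function.comp_apply, Function.comp_apply, hσl, hσw]
  -- the final computation
  rw [hE', Finset.sum_union hdisj, Finset.sum_congr rfl hmap]
  rw [hC, Finset.sum_image (fun t _ t' _ hh => hc_inj t t' hh)]
  rw [Finset.sum_congr rfl (fun t _ => hcval t)]
  rw [Fin.sum_univ_five] at hEsplit ⊢
  rw [hw0, hw1, hw2, hw3, hw4]
  linear_combination hEsplit + hπ'
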